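/- arXiv:0812.2306 — 2 statements merged into one kernel-verified Lean document; each statement's English description precedes it below -/
import Mathlib

section
/- In the field ℚ(q, z_1,…,z_l, w_1,…,w_l, u_1,…,u_l) the following convolution identity holds for every m ∈ ℕ^l: X_m(z,w) = ∑_{0 ≤ a ≤ m} X_{m−a}(u·q^{Ca}, w) · X_a(z, u^{−1}·q^{−Ca+2}), where u·q^{Ca} denotes substituting u_i q^{(Ca)_i} for the first group of variables of X_{m−a}, u^{−1}·q^{−Ca+2} denotes substituting u_i^{−1} q^{−(Ca)_i+2} for the second group of variables of X_a, and (Ca)_i = ∑_j C_{ij} a_j. (In the notation of the paper this is the identity X^{λ_1,λ_2}_β = ∑_α X^{μ−α,λ_2}_{β−α} X^{λ_1, α−μ−2ρ}_α for arbitrary weights λ_1, λ_2, μ.) -/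
/- STATEMENT 14: convolution identity for X in ℚ(q,z,w,u):
     X_m(z,w) = ∑_{0≤a≤m} X_{m−a}(u·q^{Ca}, w) · X_a(z, u⁻¹·q^{−Ca+2}),
   where X_m(z,w) = ∑_{0≤a≤m} J_{m−a}(z) J_a(w) q^{W(a)} w^a, (J_m) is the
   unique family solving the fermionic recursion in the indicated variables,
   and C is a simply-laced Cartan matrix. -/

noncomputable section

open scoped BigOperators

/-- The field ℚ(q, z_1,…,z_l, w_1,…,w_l, u_1,…,u_l). -/
abbrev F14 (l : ℕ) : Type :=
  FractionRing (MvPolynomial (Option (Fin l ⊕ Fin l ⊕ Fin l)) ℚ)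

/-- the variable q -/
def q14 (l : ℕ) : F14 l :=
  algebraMap (MvPolynomial (Option (Fin l ⊕ Fin l ⊕ Fin l)) ℚ) (F14 l)
    (MvPolynomial.X none)

/-- the variables z_i -/
def z14 (l : ℕ) (i : Fin l) : F14 l :=
  algebraMap (MvPolynomial (Option (Fin l ⊕ Fin l ⊕ Fin l)) ℚ) (F14 l)
    (MvPolynomial.X (some (Sum.inl i)))

/-- the variables w_i -/
def w14 (l : ℕ) (i : Fin l) : F14 l :=
  algebraMap (MvPolynomial (Option (Fin l ⊕ Fin l ⊕ Fin l)) ℚ) (F14 l)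
    (MvPolynomial.X (some (Sum.inr (Sum.inl i))))

/-- the variables u_i -/
def u14 (l : ℕ) (i : Fin l) : F14 l :=
  algebraMap (MvPolynomial (Option (Fin l ⊕ Fin l ⊕ Fin l)) ℚ) (F14 l)
    (MvPolynomial.X (some (Sum.inr (Sum.inr i))))

/-- `W(a) = (1/2)∑ C_{ij} a_i a_j − ∑ a_i`  (the double sum is even, so integer
division by 2 gives the exact value). -/
def W14 {l : ℕ} (C : Matrix (Fin l) (Fin l) ℤ) (a : Fin l → ℕ) : ℤ :=
  (∑ i, ∑ j, C i j * a i * a j) / 2 - ∑ i, (a i : ℤ)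

/-- `(Ca)_i = ∑_j C_{ij} a_j` -/
def Cv {l : ℕ} (C : Matrix (Fin l) (Fin l) ℤ) (a : Fin l → ℕ) (i : Fin l) : ℤ :=
  ∑ j, C i j * a j

/-- `(q)_n = ∏_{k=1}^n (1 − q^k)` -/
def qP {F : Type} [Field F] (q : F) (n : ℕ) : F :=
  ∏ k ∈ Finset.range n, (1 - q ^ (k + 1))

/-- `J` is the family satisfying `J 0 = 1` and the fermionic recursion with
variables `q`, `z` (simply-laced case). -/
def IsFermC {l : ℕ} (C : Matrix (Fin l) (Fin l) ℤ)
    {F : Type} [Field F] (q : F) (z : Fin l → F) (J : (Fin l → ℕ) → F) : Prop :=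
  J 0 = 1 ∧ ∀ m : Fin l → ℕ, J m = ∑ a ∈ Finset.Iic m,
    (∏ i, z i ^ a i) * q ^ (W14 C a) *
      (∏ i, qP q (m i - a i))⁻¹ * J a


-- ===================== auxiliary lemmas =====================

open Finset in
theorem even_quad14 {l : ℕ} (C : Matrix (Fin l) (Fin l) ℤ) (hsym : C.IsSymm)
    (hdiag : ∀ i, C i i = 2) (x : Fin l → ℤ) :
    Even (∑ i, ∑ j, C i j * x i * x j) := by
  have h : ∑ i, ∑ j, C i j * x i * x j
      = ∑ p ∈ univ ×ˢ univ, C p.1 p.2 * x p.1 * x p.2 := by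
    rw [Finset.sum_product]
  rw [h, ← Finset.sum_filter_add_sum_filter_not (univ ×ˢ univ) (fun p => p.1 = p.2)]
  apply Even.add
  · have : ∑ p ∈ (univ ×ˢ univ).filter (fun p => p.1 = p.2), C p.1 p.2 * x p.1 * x p.2
        = ∑ i, C i i * x i * x i := by
      rw [Finset.sum_filter, Finset.sum_product]
      apply Finset.sum_congr rfl
      intro i _
      simp
    rw [this]
    apply Finset.even_sum
    intro i _
    rw [hdiag]
    exact ⟨x i * x i, by ring⟩
  · have hsplit : (univ ×ˢ univ).filter (fun p : Fin l × Fin l => ¬ p.1 = p.2)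
        = ((univ ×ˢ univ).filter (fun p => p.1 < p.2)) ∪
          ((univ ×ˢ univ).filter (fun p => p.2 < p.1)) := by
      ext p
      simp only [Finset.mem_filter, Finset.mem_union, Finset.mem_product, Finset.mem_univ,
        true_and]
      constructor
      · intro hne; exact lt_or_gt_of_ne hne
      · rintro (h | h)
        · exact h.ne
        · exact h.ne'
    have hdisj : Disjoint ((univ ×ˢ univ).filter (fun p : Fin l × Fin l => p.1 < p.2))
        ((univ ×ˢ univ).filter (fun p => p.2 < p.1)) := by
      rw [Finset.disjoint_left]
      intro p hp hq
      simp only [Finset.mem_filter] at hp hq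
      exact absurd (hp.2.trans hq.2) (lt_irrefl _)
    rw [hsplit, Finset.sum_union hdisj]
    have hswap : ∑ p ∈ (univ ×ˢ univ).filter (fun p : Fin l × Fin l => p.2 < p.1),
        C p.1 p.2 * x p.1 * x p.2
        = ∑ p ∈ (univ ×ˢ univ).filter (fun p : Fin l × Fin l => p.1 < p.2),
        C p.1 p.2 * x p.1 * x p.2 := by
      apply Finset.sum_nbij' (fun p => Prod.swap p) (fun p => Prod.swap p)
      · intro p hp; simp only [Finset.mem_filter, Finset.mem_product] at hp ⊢; simpa using hp.2
      · intro p hp; simp only [Finset.mem_filter, Finset.mem_product] at hp ⊢; simpa using hp.2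
      · intro p _; simp
      · intro p _; simp
      · intro p _
        have := Matrix.IsSymm.apply hsym p.1 p.2
        simp only [Prod.fst_swap, Prod.snd_swap]
        rw [this]; ring
    rw [hswap]
    exact ⟨_, rfl⟩

theorem zpow_sum14 {F : Type} [Field F] {q : F} (hq : q ≠ 0) {ι : Type*}
    (s : Finset ι) (f : ι → ℤ) : ∏ i ∈ s, q ^ f i = q ^ (∑ i ∈ s, f i) := by
  induction s using Finset.cons_induction with
  | empty => simp
  | cons a s ha ih => rw [Finset.prod_cons, Finset.sum_cons, ih, ← zpow_add₀ hq]

theorem W14_zero {l : ℕ} (C : Matrix (Fin l) (Fin l) ℤ) : W14 C 0 = 0 := by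
  simp [W14]

theorem W14_two {l : ℕ} (C : Matrix (Fin l) (Fin l) ℤ) (hsym : C.IsSymm)
    (hdiag : ∀ i, C i i = 2) (a : Fin l → ℕ) :
    2 * W14 C a = (∑ i, ∑ j, C i j * a i * a j) - 2 * ∑ i, (a i : ℤ) := by
  obtain ⟨t, ht⟩ := even_quad14 C hsym hdiag (fun i => (a i : ℤ))
  simp only [W14]
  rw [ht]
  omega

theorem Cv_add14 {l : ℕ} (C : Matrix (Fin l) (Fin l) ℤ) (d k : Fin l → ℕ) (i : Fin l) :
    Cv C (d + k) i = Cv C d i + Cv C k i := by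
  simp only [Cv, ← Finset.sum_add_distrib]
  apply Finset.sum_congr rfl
  intro j _
  have : (d + k) j = d j + k j := rfl
  rw [this]
  push_cast
  ring

theorem quad_sub14 {l : ℕ} (C : Matrix (Fin l) (Fin l) ℤ) (hsym : C.IsSymm)
    (c k : Fin l → ℕ) (h : c ≤ k) :
    (∑ i, ∑ j, C i j * ((k - c) i : ℤ) * ((k - c) j : ℤ))
      = (∑ i, ∑ j, C i j * (k i : ℤ) * (k j : ℤ))
        + (∑ i, ∑ j, C i j * (c i : ℤ) * (c j : ℤ))
        - 2 * ∑ i, Cv C k i * (c i : ℤ) := by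
  have hsub : ∀ i, ((k - c) i : ℤ) = (k i : ℤ) - c i := by
    intro i
    have : (k - c) i = k i - c i := rfl
    rw [this, Nat.cast_sub (h i)]
  have step1 : (∑ i, ∑ j, C i j * ((k - c) i : ℤ) * ((k - c) j : ℤ))
      = (∑ i, ∑ j, C i j * (k i : ℤ) * (k j : ℤ))
        + (∑ i, ∑ j, C i j * (c i : ℤ) * (c j : ℤ))
        - ((∑ i, ∑ j, C i j * (k i : ℤ) * (c j : ℤ))
           + (∑ i, ∑ j, C i j * (c i : ℤ) * (k j : ℤ))) := by
    have : ∀ i, ∑ j, C i j * ((k - c) i : ℤ) * ((k - c) j : ℤ)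
        = ∑ j, (C i j * (k i : ℤ) * (k j : ℤ) + C i j * (c i : ℤ) * (c j : ℤ)
            - (C i j * (k i : ℤ) * (c j : ℤ) + C i j * (c i : ℤ) * (k j : ℤ))) := by
      intro i
      apply Finset.sum_congr rfl
      intro j _
      rw [hsub i, hsub j]
      ring
    rw [Finset.sum_congr rfl (fun i _ => this i)]
    simp only [Finset.sum_add_distrib, Finset.sum_sub_distrib]
  have cross1 : (∑ i, ∑ j, C i j * (k i : ℤ) * (c j : ℤ))
      = ∑ i, Cv C k i * (c i : ℤ) := by
    rw [Finset.sum_comm]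
    apply Finset.sum_congr rfl
    intro i _
    simp only [Cv, Finset.sum_mul]
    apply Finset.sum_congr rfl
    intro j _
    rw [hsym.apply i j]
  have cross2 : (∑ i, ∑ j, C i j * (c i : ℤ) * (k j : ℤ))
      = ∑ i, Cv C k i * (c i : ℤ) := by
    apply Finset.sum_congr rfl
    intro i _
    simp only [Cv, Finset.sum_mul]
    apply Finset.sum_congr rfl
    intro j _
    ring
  rw [step1, cross1, cross2]
  ring

theorem W14_sub14 {l : ℕ} (C : Matrix (Fin l) (Fin l) ℤ) (hsym : C.IsSymm)
    (hdiag : ∀ i, C i i = 2) (c k : Fin l → ℕ) (h : c ≤ k) :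
    W14 C (k - c) = W14 C k + W14 C c - (∑ i, Cv C k i * (c i : ℤ))
      + 2 * ∑ i, (c i : ℤ) := by
  have h1 := W14_two C hsym hdiag (k - c)
  have h2 := W14_two C hsym hdiag k
  have h3 := W14_two C hsym hdiag c
  have h4 := quad_sub14 C hsym c k h
  have h5 : ∑ i, ((k - c) i : ℤ) = ∑ i, (k i : ℤ) - ∑ i, (c i : ℤ) := by
    rw [← Finset.sum_sub_distrib]
    apply Finset.sum_congr rfl
    intro i _
    have : (k - c) i = k i - c i := rfl
    rw [this, Nat.cast_sub (h i)]
  omega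

open Finset in
theorem sum_Iic_swap14 {l : ℕ} {M : Type*} [AddCommMonoid M] (m : Fin l → ℕ)
    (f : (Fin l → ℕ) → (Fin l → ℕ) → M) :
    ∑ c ∈ Iic m, ∑ e ∈ Iic (m - c), f c e
      = ∑ e ∈ Iic m, ∑ c ∈ Iic (m - e), f c e := by
  rw [Finset.sum_sigma', Finset.sum_sigma']
  apply Finset.sum_nbij' (fun p => ⟨p.2, p.1⟩) (fun p => ⟨p.2, p.1⟩)
  · rintro ⟨c, e⟩ hp
    simp only [Finset.mem_sigma, Finset.mem_Iic, Pi.le_def, Pi.sub_apply] at hp ⊢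
    exact ⟨fun i => by have := hp.1 i; have := hp.2 i; omega,
           fun i => by have := hp.1 i; have := hp.2 i; omega⟩
  · rintro ⟨e, c⟩ hp
    simp only [Finset.mem_sigma, Finset.mem_Iic, Pi.le_def, Pi.sub_apply] at hp ⊢
    exact ⟨fun i => by have := hp.1 i; have := hp.2 i; omega,
           fun i => by have := hp.1 i; have := hp.2 i; omega⟩
  · rintro ⟨c, e⟩ _; rfl
  · rintro ⟨e, c⟩ _; rfl
  · rintro ⟨c, e⟩ _; rfl

open Finset in
theorem sum_Iic_reflect14 {l : ℕ} {M : Type*} [AddCommMonoid M] (k : Fin l → ℕ)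
    (f : (Fin l → ℕ) → M) :
    ∑ c ∈ Iic k, f c = ∑ c ∈ Iic k, f (k - c) := by
  apply Finset.sum_nbij' (fun c => k - c) (fun c => k - c)
  · intro c hc
    simp only [Finset.mem_Iic, Pi.le_def, Pi.sub_apply] at hc ⊢
    intro i; have := hc i; omega
  · intro c hc
    simp only [Finset.mem_Iic, Pi.le_def, Pi.sub_apply] at hc ⊢
    intro i; have := hc i; omega
  · intro c hc
    simp only [Finset.mem_Iic, Pi.le_def] at hc
    funext i
    have h1 : (k - (k - c)) i = k i - (k i - c i) := rfl
    rw [h1]; have := hc i; omega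
  · intro c hc
    simp only [Finset.mem_Iic, Pi.le_def] at hc
    funext i
    have h1 : (k - (k - c)) i = k i - (k i - c i) := rfl
    rw [h1]; have := hc i; omega
  · intro c hc
    simp only [Finset.mem_Iic, Pi.le_def] at hc
    congr 1
    funext i
    have h1 : (k - (k - c)) i = k i - (k i - c i) := rfl
    rw [h1]; have := hc i; omega

theorem q14_ne_zero (l : ℕ) : q14 l ≠ 0 := by
  intro h
  have h2 : algebraMap (MvPolynomial (Option (Fin l ⊕ Fin l ⊕ Fin l)) ℚ) (F14 l)
      (MvPolynomial.X none)
      = algebraMap (MvPolynomial (Option (Fin l ⊕ Fin l ⊕ Fin l)) ℚ) (F14 l) 0 := by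
    rw [map_zero]; exact h
  have h3 : (MvPolynomial.X none : MvPolynomial (Option (Fin l ⊕ Fin l ⊕ Fin l)) ℚ) = 0 :=
    IsFractionRing.injective (MvPolynomial (Option (Fin l ⊕ Fin l ⊕ Fin l)) ℚ) (F14 l) h2
  exact MvPolynomial.X_ne_zero (R := ℚ) (σ := Option (Fin l ⊕ Fin l ⊕ Fin l)) none h3

theorem u14_ne_zero (l : ℕ) (i : Fin l) : u14 l i ≠ 0 := by
  intro h
  have h2 : algebraMap (MvPolynomial (Option (Fin l ⊕ Fin l ⊕ Fin l)) ℚ) (F14 l)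
      (MvPolynomial.X (some (Sum.inr (Sum.inr i))))
      = algebraMap (MvPolynomial (Option (Fin l ⊕ Fin l ⊕ Fin l)) ℚ) (F14 l) 0 := by
    rw [map_zero]; exact h
  have h3 : (MvPolynomial.X (some (Sum.inr (Sum.inr i)))
      : MvPolynomial (Option (Fin l ⊕ Fin l ⊕ Fin l)) ℚ) = 0 :=
    IsFractionRing.injective (MvPolynomial (Option (Fin l ⊕ Fin l ⊕ Fin l)) ℚ) (F14 l) h2
  exact MvPolynomial.X_ne_zero (R := ℚ) (σ := Option (Fin l ⊕ Fin l ⊕ Fin l))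
    (some (Sum.inr (Sum.inr i))) h3

open Finset in
theorem mono_ne_one14 (l : ℕ) (k : Fin l → ℕ) (hk : k ≠ 0) (N : ℤ) :
    (∏ i, u14 l i ^ k i) * q14 l ^ N ≠ 1 := by
  intro h
  have hq := q14_ne_zero l
  set A := MvPolynomial (Option (Fin l ⊕ Fin l ⊕ Fin l)) ℚ
  set φ := algebraMap A (F14 l)
  set M : ℕ := N.natAbs
  have hNM : (0 : ℤ) ≤ N + M := by simp only [M]; omega
  set P : ℕ := (N + M).toNat
  have hP : (P : ℤ) = N + M := Int.toNat_of_nonneg hNM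
  have h2 : (∏ i, u14 l i ^ k i) * q14 l ^ P = q14 l ^ M := by
    have : (∏ i, u14 l i ^ k i) * q14 l ^ ((P : ℤ)) = q14 l ^ ((M : ℤ)) := by
      rw [hP, zpow_add₀ hq, ← mul_assoc, h, one_mul]
    rwa [zpow_natCast, zpow_natCast] at this
  have h3 : φ ((∏ i, MvPolynomial.X (some (Sum.inr (Sum.inr i))) ^ k i)
      * MvPolynomial.X none ^ P) = φ (MvPolynomial.X none ^ M) := by
    rw [map_mul, map_prod, map_pow]
    simp only [map_pow]
    exact h2
  have h4 := IsFractionRing.injective A (F14 l) h3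
  have h5 := congrArg (MvPolynomial.eval
    (fun v : Option (Fin l ⊕ Fin l ⊕ Fin l) =>
      match v with
      | some (Sum.inr (Sum.inr _)) => (2 : ℚ)
      | _ => 1)) h4
  simp only [map_mul, map_prod, map_pow, MvPolynomial.eval_X] at h5
  norm_num at h5
  rw [Finset.prod_pow_eq_pow_sum] at h5
  have hsum : ∑ i, k i ≠ 0 := by
    intro hs
    apply hk
    funext i
    have := Finset.sum_eq_zero_iff.mp hs i (Finset.mem_univ i)
    simpa using this
  have hgt : (1:ℚ) < 2 ^ (∑ i, k i) := one_lt_pow₀ (by norm_num) hsum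
  rw [h5] at hgt
  exact lt_irrefl _ hgt

open Finset in
theorem norm_u14 (l : ℕ) (g : Fin l → ℤ) (e : Fin l → ℕ) :
    ∏ i, (u14 l i * q14 l ^ g i) ^ e i
      = (∏ i, u14 l i ^ e i) * q14 l ^ (∑ i, g i * (e i : ℤ)) := by
  rw [← zpow_sum14 (q14_ne_zero l), ← Finset.prod_mul_distrib]
  apply Finset.prod_congr rfl
  intro i _
  rw [mul_pow, ← zpow_natCast (q14 l ^ g i) (e i), ← zpow_mul]

open Finset in
theorem norm_uinv14 (l : ℕ) (g : Fin l → ℤ) (e : Fin l → ℕ) :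
    ∏ i, ((u14 l i)⁻¹ * q14 l ^ g i) ^ e i
      = (∏ i, u14 l i ^ e i)⁻¹ * q14 l ^ (∑ i, g i * (e i : ℤ)) := by
  rw [← zpow_sum14 (q14_ne_zero l), ← Finset.prod_inv_distrib, ← Finset.prod_mul_distrib]
  apply Finset.prod_congr rfl
  intro i _
  rw [mul_pow, inv_pow, ← zpow_natCast (q14 l ^ g i) (e i), ← zpow_mul]

open Finset in
theorem prod_pow_sub14 (l : ℕ) (c k : Fin l → ℕ) (h : c ≤ k) :
    ∏ i, u14 l i ^ (k - c) i
      = (∏ i, u14 l i ^ k i) * (∏ i, u14 l i ^ c i)⁻¹ := by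
  rw [← Finset.prod_inv_distrib, ← Finset.prod_mul_distrib]
  apply Finset.prod_congr rfl
  intro i _
  have : (k - c) i = k i - c i := rfl
  rw [this, pow_sub₀ (u14 l i) (u14_ne_zero l i) (h i)]

open Finset in
theorem stepE14 {l : ℕ} (C : Matrix (Fin l) (Fin l) ℤ) (hsym : C.IsSymm)
    (hdiag : ∀ i, C i i = 2) (d k c : Fin l → ℕ) (h : c ≤ k) :
    (∏ i, (u14 l i * q14 l ^ Cv C d i) ^ (k - c) i) * q14 l ^ W14 C (k - c)
      = ((∏ i, (u14 l i * q14 l ^ Cv C d i) ^ k i) * q14 l ^ W14 C k)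
        * ((∏ i, ((u14 l i)⁻¹ * q14 l ^ (-(Cv C (d + k) i) + 2)) ^ c i) * q14 l ^ W14 C c) := by
  have hq := q14_ne_zero l
  rw [norm_u14, norm_u14, norm_uinv14, prod_pow_sub14 l c k h]
  rw [mul_assoc ((∏ i, u14 l i ^ k i) * (∏ i, u14 l i ^ c i)⁻¹), ← zpow_add₀ hq]
  have hE : (∑ i, Cv C d i * ((k - c) i : ℤ)) + W14 C (k - c)
      = ((∑ i, Cv C d i * (k i : ℤ)) + W14 C k)
        + ((∑ i, (-(Cv C (d + k) i) + 2) * (c i : ℤ)) + W14 C c) := by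
    have h1 : (∑ i, Cv C d i * ((k - c) i : ℤ))
        = (∑ i, Cv C d i * (k i : ℤ)) - ∑ i, Cv C d i * (c i : ℤ) := by
      rw [← Finset.sum_sub_distrib]
      apply Finset.sum_congr rfl
      intro i _
      have : (k - c) i = k i - c i := rfl
      rw [this, Nat.cast_sub (h i)]
      ring
    have h2 : (∑ i, (-(Cv C (d + k) i) + 2) * (c i : ℤ))
        = 2 * (∑ i, (c i : ℤ)) - (∑ i, Cv C d i * (c i : ℤ))
          - ∑ i, Cv C k i * (c i : ℤ) := by
      rw [Finset.mul_sum, ← Finset.sum_sub_distrib, ← Finset.sum_sub_distrib]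
      apply Finset.sum_congr rfl
      intro i _
      rw [Cv_add14]
      ring
    have h3 := W14_sub14 C hsym hdiag c k h
    omega
  calc ((∏ i, u14 l i ^ k i) * (∏ i, u14 l i ^ c i)⁻¹)
        * q14 l ^ ((∑ i, Cv C d i * ((k - c) i : ℤ)) + W14 C (k - c))
      = ((∏ i, u14 l i ^ k i) * (∏ i, u14 l i ^ c i)⁻¹)
        * q14 l ^ (((∑ i, Cv C d i * (k i : ℤ)) + W14 C k)
          + ((∑ i, (-(Cv C (d + k) i) + 2) * (c i : ℤ)) + W14 C c)) := by rw [hE]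
    _ = _ := by
        rw [zpow_add₀ hq, zpow_add₀ hq, zpow_add₀ hq]
        ring

open Finset in
theorem key14 {l : ℕ} (C : Matrix (Fin l) (Fin l) ℤ) (hsym : C.IsSymm)
    (hdiag : ∀ i, C i i = 2) (d k : Fin l → ℕ) (F G : (Fin l → ℕ) → F14 l)
    (hF0 : F 0 = 1)
    (hF : ∀ m, F m = ∑ a ∈ Iic m,
      (∏ i, (u14 l i * q14 l ^ Cv C d i) ^ a i) * q14 l ^ W14 C a *
        (∏ i, qP (q14 l) (m i - a i))⁻¹ * F a)
    (hG0 : G 0 = 1)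
    (hG : ∀ m, G m = ∑ a ∈ Iic m,
      (∏ i, ((u14 l i)⁻¹ * q14 l ^ (-(Cv C (d + k) i) + 2)) ^ a i) * q14 l ^ W14 C a *
        (∏ i, qP (q14 l) (m i - a i))⁻¹ * G a) :
    ∑ c ∈ Iic k,
      (G c * q14 l ^ W14 C c * ∏ i, ((u14 l i)⁻¹ * q14 l ^ (-(Cv C (d + k) i) + 2)) ^ c i)
        * F (k - c)
      = if k = 0 then 1 else 0 := by
  have hq := q14_ne_zero l
  by_cases hk : k = 0
  · subst hk
    rw [if_pos rfl]
    have h0 : Iic (0 : Fin l → ℕ) = {0} := by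
      ext c
      simp only [Finset.mem_Iic, Finset.mem_singleton]
      constructor
      · intro hc; funext i; have h : c i ≤ 0 := hc i; show c i = 0; omega
      · intro hc; subst hc; exact le_rfl
    rw [h0, Finset.sum_singleton]
    have hz : (0 : Fin l → ℕ) - 0 = 0 := by funext i; rfl
    rw [hz, hF0, hG0, W14_zero]
    simp
  · rw [if_neg hk]
    set T : F14 l := (∏ i, (u14 l i * q14 l ^ Cv C d i) ^ k i) * q14 l ^ W14 C k with hT
    set S : F14 l := ∑ c ∈ Iic k,
      (G c * q14 l ^ W14 C c * ∏ i, ((u14 l i)⁻¹ * q14 l ^ (-(Cv C (d + k) i) + 2)) ^ c i)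
        * F (k - c) with hS
    have hTS : S = T * S := by
      calc S = ∑ c ∈ Iic k, ∑ e ∈ Iic (k - c),
          (G c * q14 l ^ W14 C c * ∏ i, ((u14 l i)⁻¹ * q14 l ^ (-(Cv C (d + k) i) + 2)) ^ c i)
            * ((∏ i, (u14 l i * q14 l ^ Cv C d i) ^ e i) * q14 l ^ W14 C e *
              (∏ i, qP (q14 l) ((k - c) i - e i))⁻¹ * F e) := by
            rw [hS]
            apply Finset.sum_congr rfl
            intro c _
            rw [hF (k - c), Finset.mul_sum]
        _ = ∑ e ∈ Iic k, ∑ c ∈ Iic (k - e),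
          (G c * q14 l ^ W14 C c * ∏ i, ((u14 l i)⁻¹ * q14 l ^ (-(Cv C (d + k) i) + 2)) ^ c i)
            * ((∏ i, (u14 l i * q14 l ^ Cv C d i) ^ e i) * q14 l ^ W14 C e *
              (∏ i, qP (q14 l) ((k - c) i - e i))⁻¹ * F e) := by
            exact sum_Iic_swap14 k _
        _ = ∑ e ∈ Iic k,
            ((∏ i, (u14 l i * q14 l ^ Cv C d i) ^ e i) * q14 l ^ W14 C e * F e)
            * ∑ c ∈ Iic (k - e),
              (∏ i, ((u14 l i)⁻¹ * q14 l ^ (-(Cv C (d + k) i) + 2)) ^ c i) * q14 l ^ W14 C c *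
                (∏ i, qP (q14 l) ((k - e) i - c i))⁻¹ * G c := by
            apply Finset.sum_congr rfl
            intro e _
            rw [Finset.mul_sum]
            apply Finset.sum_congr rfl
            intro c _
            have hqp : (∏ i, qP (q14 l) ((k - c) i - e i))
                = ∏ i, qP (q14 l) ((k - e) i - c i) := by
              apply Finset.prod_congr rfl
              intro i _
              congr 1
              show k i - c i - e i = k i - e i - c i
              omega
            rw [hqp]
            ring
        _ = ∑ e ∈ Iic k,
            ((∏ i, (u14 l i * q14 l ^ Cv C d i) ^ e i) * q14 l ^ W14 C e * F e) * G (k - e) := by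
            apply Finset.sum_congr rfl
            intro e _
            rw [← hG (k - e)]
        _ = ∑ c ∈ Iic k,
            ((∏ i, (u14 l i * q14 l ^ Cv C d i) ^ (k - c) i) * q14 l ^ W14 C (k - c)
              * F (k - c)) * G (k - (k - c)) := sum_Iic_reflect14 k _
        _ = ∑ c ∈ Iic k, T *
            ((G c * q14 l ^ W14 C c *
              ∏ i, ((u14 l i)⁻¹ * q14 l ^ (-(Cv C (d + k) i) + 2)) ^ c i) * F (k - c)) := by
            apply Finset.sum_congr rfl
            intro c hc
            have hck : c ≤ k := Finset.mem_Iic.mp hc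
            have h1 : k - (k - c) = c := by
              funext i
              show k i - (k i - c i) = c i
              have hci : c i ≤ k i := hck i
              omega
            rw [h1, stepE14 C hsym hdiag d k c hck]
            ring
        _ = T * S := by rw [← Finset.mul_sum, hS]
    have hT1 : T ≠ 1 := by
      rw [hT, norm_u14, mul_assoc, ← zpow_add₀ hq]
      exact mono_ne_one14 l k hk _
    have hzero : (1 - T) * S = 0 := by
      rw [sub_mul, one_mul, sub_eq_zero]
      exact hTS
    rcases mul_eq_zero.mp hzero with h | h
    · exact absurd (sub_eq_zero.mp h).symm hT1
    · exact h

open Finset in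
/-- `ξ = Q·ζ` : the second factor appearing in the statement. -/
def xi14 {l : ℕ} (C : Matrix (Fin l) (Fin l) ℤ) (ζ : (Fin l → ℕ) → F14 l)
    (JA : (Fin l → ℕ) → (Fin l → ℕ) → F14 l) : (Fin l → ℕ) → F14 l :=
  fun a => ∑ b ∈ Iic a, ζ (a - b) * JA a b * q14 l ^ W14 C b *
    ∏ i, ((u14 l i)⁻¹ * q14 l ^ (-(Cv C a i) + 2)) ^ b i

open Finset in
/-- `y = P·ξ`. -/
def y14 {l : ℕ} (C : Matrix (Fin l) (Fin l) ℤ) (ζ : (Fin l → ℕ) → F14 l)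
    (JA JU : (Fin l → ℕ) → (Fin l → ℕ) → F14 l) : (Fin l → ℕ) → F14 l :=
  fun n => ∑ a ∈ Iic n, JU a (n - a) * xi14 C ζ JA a

open Finset in
theorem star14 {l : ℕ} (C : Matrix (Fin l) (Fin l) ℤ) (hsym : C.IsSymm)
    (hdiag : ∀ i, C i i = 2) (ζ : (Fin l → ℕ) → F14 l)
    (JA JU : (Fin l → ℕ) → (Fin l → ℕ) → F14 l)
    (hJA0 : ∀ a, JA a 0 = 1)
    (hJArec : ∀ a m, JA a m = ∑ b ∈ Iic m,
      (∏ i, ((u14 l i)⁻¹ * q14 l ^ (-(Cv C a i) + 2)) ^ b i) * q14 l ^ W14 C b *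
        (∏ i, qP (q14 l) (m i - b i))⁻¹ * JA a b)
    (hJU0 : ∀ a, JU a 0 = 1)
    (hJUrec : ∀ a m, JU a m = ∑ b ∈ Iic m,
      (∏ i, (u14 l i * q14 l ^ Cv C a i) ^ b i) * q14 l ^ W14 C b *
        (∏ i, qP (q14 l) (m i - b i))⁻¹ * JU a b) :
    ∀ n, y14 C ζ JA JU n = ζ n := by
  have key : ∀ d k : Fin l → ℕ, ∑ c ∈ Iic k,
      (JA (d + k) c * q14 l ^ W14 C c *
        ∏ i, ((u14 l i)⁻¹ * q14 l ^ (-(Cv C (d + k) i) + 2)) ^ c i) * JU d (k - c)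
      = if k = 0 then 1 else 0 := fun d k =>
    key14 C hsym hdiag d k (JU d) (JA (d + k)) (hJU0 d) (hJUrec d) (hJA0 (d + k))
      (hJArec (d + k))
  have hQy : ∀ n : Fin l → ℕ, ∑ c ∈ Iic n,
      (JA n c * q14 l ^ W14 C c * ∏ i, ((u14 l i)⁻¹ * q14 l ^ (-(Cv C n i) + 2)) ^ c i)
        * (y14 C ζ JA JU (n - c) - ζ (n - c)) = 0 := by
    intro n
    have h1 : ∑ c ∈ Iic n,
        (JA n c * q14 l ^ W14 C c * ∏ i, ((u14 l i)⁻¹ * q14 l ^ (-(Cv C n i) + 2)) ^ c i)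
          * y14 C ζ JA JU (n - c) = xi14 C ζ JA n := by
      calc ∑ c ∈ Iic n,
          (JA n c * q14 l ^ W14 C c * ∏ i, ((u14 l i)⁻¹ * q14 l ^ (-(Cv C n i) + 2)) ^ c i)
            * y14 C ζ JA JU (n - c)
          = ∑ c ∈ Iic n, ∑ a ∈ Iic (n - c),
            (JA n c * q14 l ^ W14 C c * ∏ i, ((u14 l i)⁻¹ * q14 l ^ (-(Cv C n i) + 2)) ^ c i)
              * (JU a ((n - c) - a) * xi14 C ζ JA a) := by
            apply Finset.sum_congr rfl
            intro c _
            rw [show y14 C ζ JA JU (n - c)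
              = ∑ a ∈ Iic (n - c), JU a ((n - c) - a) * xi14 C ζ JA a from rfl,
              Finset.mul_sum]
        _ = ∑ a ∈ Iic n, ∑ c ∈ Iic (n - a),
            (JA n c * q14 l ^ W14 C c * ∏ i, ((u14 l i)⁻¹ * q14 l ^ (-(Cv C n i) + 2)) ^ c i)
              * (JU a ((n - c) - a) * xi14 C ζ JA a) := sum_Iic_swap14 n _
        _ = ∑ a ∈ Iic n, (∑ c ∈ Iic (n - a),
            (JA n c * q14 l ^ W14 C c * ∏ i, ((u14 l i)⁻¹ * q14 l ^ (-(Cv C n i) + 2)) ^ c i)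
              * JU a ((n - a) - c)) * xi14 C ζ JA a := by
            apply Finset.sum_congr rfl
            intro a _
            rw [Finset.sum_mul]
            apply Finset.sum_congr rfl
            intro c _
            have h3 : (n - c) - a = (n - a) - c := by
              funext i
              show n i - c i - a i = n i - a i - c i
              omega
            rw [h3]
            ring
        _ = ∑ a ∈ Iic n, (if n - a = 0 then 1 else 0) * xi14 C ζ JA a := by
            apply Finset.sum_congr rfl
            intro a ha
            have han : a ≤ n := Finset.mem_Iic.mp ha
            have hna : a + (n - a) = n := by
              funext i
              have h4 : a i ≤ n i := han i
              show a i + (n i - a i) = n i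
              omega
            have hkey := key a (n - a)
            rw [hna] at hkey
            rw [hkey]
        _ = xi14 C ζ JA n := by
            rw [Finset.sum_eq_single_of_mem n (Finset.mem_Iic.mpr le_rfl)]
            · rw [show n - n = 0 from by funext i; show n i - n i = 0; omega, if_pos rfl,
                one_mul]
            · intro b hb hbn
              have hb' : b ≤ n := Finset.mem_Iic.mp hb
              have hnb : ¬ (n - b = 0) := by
                intro h0
                apply hbn
                funext i
                have h5 : n i - b i = 0 := congrFun h0 i
                have h6 : b i ≤ n i := hb' i
                omega
              rw [if_neg hnb, zero_mul]
    have h2 : ∑ c ∈ Iic n,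
        (JA n c * q14 l ^ W14 C c * ∏ i, ((u14 l i)⁻¹ * q14 l ^ (-(Cv C n i) + 2)) ^ c i)
          * ζ (n - c) = xi14 C ζ JA n := by
      rw [show xi14 C ζ JA n = ∑ b ∈ Iic n, ζ (n - b) * JA n b * q14 l ^ W14 C b *
        ∏ i, ((u14 l i)⁻¹ * q14 l ^ (-(Cv C n i) + 2)) ^ b i from rfl]
      apply Finset.sum_congr rfl
      intro c _
      ring
    calc ∑ c ∈ Iic n,
        (JA n c * q14 l ^ W14 C c * ∏ i, ((u14 l i)⁻¹ * q14 l ^ (-(Cv C n i) + 2)) ^ c i)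
          * (y14 C ζ JA JU (n - c) - ζ (n - c))
        = (∑ c ∈ Iic n,
            (JA n c * q14 l ^ W14 C c * ∏ i, ((u14 l i)⁻¹ * q14 l ^ (-(Cv C n i) + 2)) ^ c i)
              * y14 C ζ JA JU (n - c))
          - ∑ c ∈ Iic n,
            (JA n c * q14 l ^ W14 C c * ∏ i, ((u14 l i)⁻¹ * q14 l ^ (-(Cv C n i) + 2)) ^ c i)
              * ζ (n - c) := by
          rw [← Finset.sum_sub_distrib]
          apply Finset.sum_congr rfl
          intro c _
          ring
      _ = 0 := by rw [h1, h2, sub_self]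
  have hdiff : ∀ N : ℕ, ∀ n : Fin l → ℕ, (∑ i, n i) = N → y14 C ζ JA JU n - ζ n = 0 := by
    intro N
    induction N using Nat.strong_induction_on with
    | _ N ih =>
      intro n hn
      have h0 := hQy n
      rw [Finset.sum_eq_single_of_mem 0 (Finset.mem_Iic.mpr (fun i => Nat.zero_le _))] at h0
      · have hB0 : JA n 0 * q14 l ^ W14 C 0 *
            ∏ i, ((u14 l i)⁻¹ * q14 l ^ (-(Cv C n i) + 2)) ^ (0 : Fin l → ℕ) i = 1 := by
          rw [hJA0 n, W14_zero]
          norm_num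
        have hn0 : n - 0 = n := by funext i; show n i - 0 = n i; omega
        rw [hn0, hB0, one_mul] at h0
        exact h0
      · intro c hc hc0
        have hcn : c ≤ n := Finset.mem_Iic.mp hc
        have hex : ∃ i, c i ≠ 0 := by
          by_contra hall
          push_neg at hall
          exact hc0 (funext hall)
        obtain ⟨i0, hi0⟩ := hex
        have hlt : (∑ i, (n - c) i) < N := by
          rw [← hn]
          apply Finset.sum_lt_sum
          · intro i _
            show n i - c i ≤ n i
            omega
          · refine ⟨i0, Finset.mem_univ i0, ?_⟩
            have h7 : c i0 ≤ n i0 := hcn i0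
            show n i0 - c i0 < n i0
            omega
        have h8 := ih _ hlt (n - c) rfl
        rw [h8, mul_zero]
  intro n
  exact sub_eq_zero.mp (hdiff (∑ i, n i) n rfl)

theorem stmt_14 (l : ℕ) (hl : 1 ≤ l) (C : Matrix (Fin l) (Fin l) ℤ)
    (hsym : C.IsSymm) (hdiag : ∀ i, C i i = 2)
    (hoff : ∀ i j, i ≠ j → C i j = 0 ∨ C i j = -1)
    (hposdef : ∀ x : Fin l → ℤ, x ≠ 0 → 0 < ∑ i, ∑ j, C i j * x i * x j)
    -- J in the variables z, respectively w
    (Jz Jw : (Fin l → ℕ) → F14 l)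
    (hJz : IsFermC C (q14 l) (z14 l) Jz)
    (hJw : IsFermC C (q14 l) (w14 l) Jw)
    -- for each a, J in the substituted variables u_i⁻¹ q^{−(Ca)_i+2}
    (JA : (Fin l → ℕ) → (Fin l → ℕ) → F14 l)
    (hJA : ∀ a, IsFermC C (q14 l)
      (fun i => (u14 l i)⁻¹ * q14 l ^ (-(Cv C a i) + 2)) (JA a))
    -- for each a, J in the substituted variables u_i q^{(Ca)_i}
    (JU : (Fin l → ℕ) → (Fin l → ℕ) → F14 l)
    (hJU : ∀ a, IsFermC C (q14 l)
      (fun i => u14 l i * q14 l ^ (Cv C a i)) (JU a)) :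
    ∀ m : Fin l → ℕ,
      ∑ a ∈ Finset.Iic m,
        Jz (m - a) * Jw a * q14 l ^ (W14 C a) * ∏ i, w14 l i ^ a i
      = ∑ a ∈ Finset.Iic m,
          (∑ b ∈ Finset.Iic (m - a),
            JU a (m - a - b) * Jw b * q14 l ^ (W14 C b) * ∏ i, w14 l i ^ b i) *
          (∑ b ∈ Finset.Iic a,
            Jz (a - b) * JA a b * q14 l ^ (W14 C b) *
              ∏ i, ((u14 l i)⁻¹ * q14 l ^ (-(Cv C a i) + 2)) ^ b i) := by
  intro m
  have hJA0 : ∀ a, JA a 0 = 1 := fun a => (hJA a).1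
  have hJU0 : ∀ a, JU a 0 = 1 := fun a => (hJU a).1
  have hJArec : ∀ a m', JA a m' = ∑ b ∈ Finset.Iic m',
      (∏ i, ((u14 l i)⁻¹ * q14 l ^ (-(Cv C a i) + 2)) ^ b i) * q14 l ^ W14 C b *
        (∏ i, qP (q14 l) (m' i - b i))⁻¹ * JA a b := fun a m' => (hJA a).2 m'
  have hJUrec : ∀ a m', JU a m' = ∑ b ∈ Finset.Iic m',
      (∏ i, (u14 l i * q14 l ^ Cv C a i) ^ b i) * q14 l ^ W14 C b *
        (∏ i, qP (q14 l) (m' i - b i))⁻¹ * JU a b := fun a m' => (hJU a).2 m'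
  have hstar := star14 C hsym hdiag Jz JA JU hJA0 hJArec hJU0 hJUrec
  calc ∑ a ∈ Finset.Iic m,
        Jz (m - a) * Jw a * q14 l ^ (W14 C a) * ∏ i, w14 l i ^ a i
      = ∑ b ∈ Finset.Iic m,
        (Jw b * q14 l ^ W14 C b * ∏ i, w14 l i ^ b i) * Jz (m - b) := by
        apply Finset.sum_congr rfl
        intro a _
        ring
    _ = ∑ b ∈ Finset.Iic m,
        (Jw b * q14 l ^ W14 C b * ∏ i, w14 l i ^ b i) * y14 C Jz JA JU (m - b) := by
        apply Finset.sum_congr rfl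
        intro b _
        rw [hstar (m - b)]
    _ = ∑ b ∈ Finset.Iic m, ∑ a ∈ Finset.Iic (m - b),
        (Jw b * q14 l ^ W14 C b * ∏ i, w14 l i ^ b i)
          * (JU a ((m - b) - a) * xi14 C Jz JA a) := by
        apply Finset.sum_congr rfl
        intro b _
        rw [show y14 C Jz JA JU (m - b)
          = ∑ a ∈ Finset.Iic (m - b), JU a ((m - b) - a) * xi14 C Jz JA a from rfl,
          Finset.mul_sum]
    _ = ∑ a ∈ Finset.Iic m, ∑ b ∈ Finset.Iic (m - a),
        (Jw b * q14 l ^ W14 C b * ∏ i, w14 l i ^ b i)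
          * (JU a ((m - b) - a) * xi14 C Jz JA a) := (sum_Iic_swap14 m _).symm
    _ = ∑ a ∈ Finset.Iic m,
          (∑ b ∈ Finset.Iic (m - a),
            JU a (m - a - b) * Jw b * q14 l ^ (W14 C b) * ∏ i, w14 l i ^ b i) *
          (∑ b ∈ Finset.Iic a,
            Jz (a - b) * JA a b * q14 l ^ (W14 C b) *
              ∏ i, ((u14 l i)⁻¹ * q14 l ^ (-(Cv C a i) + 2)) ^ b i) := by
        apply Finset.sum_congr rfl
        intro a _
        rw [show (∑ b ∈ Finset.Iic a,
            Jz (a - b) * JA a b * q14 l ^ (W14 C b) *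
              ∏ i, ((u14 l i)⁻¹ * q14 l ^ (-(Cv C a i) + 2)) ^ b i)
          = xi14 C Jz JA a from rfl]
        rw [Finset.sum_mul]
        apply Finset.sum_congr rfl
        intro b _
        have h1 : m - a - b = (m - b) - a := by
          funext i
          show m i - a i - b i = m i - b i - a i
          omega
        rw [h1]
        ring

end
end

section
/- For every m ∈ ℕ^l the following identity holds in F = ℚ(q, z_1,…,z_l): ∑_{0 ≤ a ≤ m} (z^a q^{W(a)})^{−1} · J_a(z^{−1}·q^{−Ba+2d}) · J_{m−a}(z·q^{Ba}) = δ_{m,0}, where J_a(z^{−1}·q^{−Ba+2d}) denotes the image of J_a under the substitution z_i ↦ z_i^{−1} q^{−(Ba)_i + 2d_i}, J_{m−a}(z·q^{Ba}) the image of J_{m−a} under z_i ↦ z_i q^{(Ba)_i}, (Ba)_i = ∑_j B_{ij} a_j, and δ_{m,0} equals 1 if m = 0 and 0 otherwise. (In the notation of the paper: ∑_{α ∈ Q_+} J^{α−λ−2ρ}_α J^{λ−α}_{β−α} q^{−(α,α)/2 + (λ+ρ,α)} = δ_{β,0} for any simple Lie algebra.) -/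
/- STATEMENT 15: in F = ℚ(q,z_1,…,z_l), for the symmetrized Cartan matrix B:
     ∑_{0≤a≤m} (z^a q^{W(a)})⁻¹ · J_a(z⁻¹·q^{−Ba+2d}) · J_{m−a}(z·q^{Ba}) = δ_{m,0},
   where the substituted J's are the (unique) solutions of the fermionic
   recursion in the substituted variables. -/

noncomputable section

open scoped BigOperators

/-- The field ℚ(q, z_1, …, z_l). -/
abbrev F15 (l : ℕ) : Type := FractionRing (MvPolynomial (Fin (l + 1)) ℚ)

/-- the variable q -/
def q15 (l : ℕ) : F15 l :=
  algebraMap (MvPolynomial (Fin (l + 1)) ℚ) (F15 l) (MvPolynomial.X 0)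

/-- the variables z_i -/
def z15 (l : ℕ) (i : Fin l) : F15 l :=
  algebraMap (MvPolynomial (Fin (l + 1)) ℚ) (F15 l) (MvPolynomial.X i.succ)

/-- `W(a) = (1/2)∑ B_{ij} a_i a_j − ∑ d_i a_i`  (the double sum is even, so
integer division by 2 gives the exact value). -/
def W15 {l : ℕ} (B : Matrix (Fin l) (Fin l) ℤ) (d : Fin l → ℕ) (a : Fin l → ℕ) : ℤ :=
  (∑ i, ∑ j, B i j * a i * a j) / 2 - ∑ i, (d i : ℤ) * a i

/-- `(Ba)_i = ∑_j B_{ij} a_j` -/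
def Bv {l : ℕ} (B : Matrix (Fin l) (Fin l) ℤ) (a : Fin l → ℕ) (i : Fin l) : ℤ :=
  ∑ j, B i j * a j

/-- `(Q;Q)_n = ∏_{k=1}^n (1 − Q^k)` -/
def pochQ {F : Type} [Field F] (Q : F) (n : ℕ) : F :=
  ∏ k ∈ Finset.range n, (1 - Q ^ (k + 1))

/-- `J` is the family satisfying `J 0 = 1` and the fermionic recursion with
variables `q`, `z`. -/
def IsFerm {l : ℕ} (B : Matrix (Fin l) (Fin l) ℤ) (d : Fin l → ℕ)
    {F : Type} [Field F] (q : F) (z : Fin l → F) (J : (Fin l → ℕ) → F) : Prop :=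
  J 0 = 1 ∧ ∀ m : Fin l → ℕ, J m = ∑ a ∈ Finset.Iic m,
    (∏ i, z i ^ a i) * q ^ (W15 B d a) *
      (∏ i, pochQ (q ^ d i) (m i - a i))⁻¹ * J a

namespace S15

variable {l : ℕ}

/-! ### basic facts about the field -/

lemma alg_inj : Function.Injective ⇑(algebraMap (MvPolynomial (Fin (l + 1)) ℚ) (F15 l)) :=
  IsFractionRing.injective _ _

lemma q_ne : q15 l ≠ 0 := by
  simp [q15, map_eq_zero_iff _ alg_inj, MvPolynomial.X_ne_zero]

lemma z_ne (i : Fin l) : z15 l i ≠ 0 := by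
  simp [z15, map_eq_zero_iff _ alg_inj, MvPolynomial.X_ne_zero]

lemma zpow_sum (x : F15 l) (hx : x ≠ 0) (f : Fin l → ℤ) :
    x ^ (∑ i, f i) = ∏ i, x ^ f i := by
  classical
  induction (Finset.univ : Finset (Fin l)) using Finset.cons_induction with
  | empty => simp
  | cons a s ha ih => rw [Finset.sum_cons, Finset.prod_cons, zpow_add₀ hx, ih]

lemma mono_ne_one (m : Fin l → ℕ) (hm : m ≠ 0) (N : ℤ) :
    (∏ i, z15 l i ^ m i) * q15 l ^ N ≠ 1 := by
  intro h
  obtain ⟨i, hi⟩ : ∃ i, m i ≠ 0 := by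
    by_contra hc; push_neg at hc; exact hm (funext fun i => hc i)
  have hz : (∏ i, z15 l i ^ m i) = q15 l ^ (-N) := by
    rw [zpow_neg]
    have h' := congrArg (fun t => t * (q15 l ^ N)⁻¹) h
    simpa [mul_assoc, mul_inv_cancel₀ (zpow_ne_zero N (q_ne (l := l)))] using h'
  have h2 : (∏ i, z15 l i ^ m i) * q15 l ^ (N.toNat) = q15 l ^ ((-N).toNat) := by
    rw [hz, ← zpow_natCast (q15 l) N.toNat, ← zpow_add₀ q_ne,
      show -N + (N.toNat : ℤ) = (((-N).toNat : ℕ) : ℤ) by omega, zpow_natCast]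
  have h3 : algebraMap (MvPolynomial (Fin (l + 1)) ℚ) (F15 l)
      ((∏ j, MvPolynomial.X j.succ ^ m j) * MvPolynomial.X 0 ^ N.toNat)
      = algebraMap (MvPolynomial (Fin (l + 1)) ℚ) (F15 l) (MvPolynomial.X 0 ^ (-N).toNat) := by
    simpa [map_mul, map_prod, map_pow, z15, q15] using h2
  have h4 := alg_inj h3
  have h5 := congrArg (MvPolynomial.aeval
      (fun j : Fin (l+1) => if j = i.succ then (Polynomial.X : Polynomial ℚ) else 1)) h4
  simp [map_prod, Fin.succ_ne_zero, (Fin.succ_ne_zero i).symm, Fin.succ_inj] at h5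
  have := congrArg (Polynomial.eval (0:ℚ)) h5
  simp [Polynomial.eval_pow, zero_pow hi] at this

/-! ### quadratic form arithmetic -/

variable (B : Matrix (Fin l) (Fin l) ℤ) (d : Fin l → ℕ)

def QQ (a : Fin l → ℕ) : ℤ := ∑ i, ∑ j, B i j * a i * a j
def crossZ (a b : Fin l → ℕ) : ℤ := ∑ i, ∑ j, B i j * a i * b j

lemma QQ_even (hsym : B.IsSymm) (hdiag : ∀ i, B i i = 2 * d i) (a : Fin l → ℕ) :
    2 ∣ QQ B a := by
  classical
  have hcast : ((QQ B a : ℤ) : ZMod 2) = 0 := by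
    have h1 : ((QQ B a : ℤ) : ZMod 2)
        = ∑ p ∈ (Finset.univ ×ˢ Finset.univ : Finset (Fin l × Fin l)),
            ((B p.1 p.2 : ZMod 2) * (a p.1 : ZMod 2) * (a p.2 : ZMod 2)) := by
      rw [QQ]
      push_cast
      rw [← Finset.sum_product']
    rw [h1, ← Finset.diag_union_offDiag (Finset.univ : Finset (Fin l)),
      Finset.sum_union (Finset.disjoint_diag_offDiag _), Finset.sum_diag]
    have hd : ∑ i : Fin l, ((B i i : ZMod 2) * (a i : ZMod 2) * (a i : ZMod 2)) = 0 := by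
      apply Finset.sum_eq_zero
      intro i _
      have h20 : (2 : ZMod 2) = 0 := by decide
      have : ((B i i : ℤ) : ZMod 2) = 0 := by
        rw [hdiag i]; push_cast; rw [h20, zero_mul]
      rw [this, zero_mul, zero_mul]
    rw [hd, zero_add]
    apply Finset.sum_involution (fun p _ => Prod.swap p)
    · intro p hp
      have hsw : B p.2 p.1 = B p.1 p.2 := hsym.apply p.1 p.2
      have h2 : ((B p.2 p.1 : ℤ) : ZMod 2) * (a p.2 : ZMod 2) * (a p.1 : ZMod 2)
          = ((B p.1 p.2 : ℤ) : ZMod 2) * (a p.1 : ZMod 2) * (a p.2 : ZMod 2) := by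
        rw [hsw]; ring
      show _ + _ = (0 : ZMod 2)
      rw [show p.swap.1 = p.2 from rfl, show p.swap.2 = p.1 from rfl, h2, ← two_mul]
      have h20 : (2 : ZMod 2) = 0 := by decide
      rw [h20, zero_mul]
    · intro p hp _
      rcases Finset.mem_offDiag.mp hp with ⟨_, _, hne⟩
      intro hcon
      exact hne ((congrArg Prod.fst hcon).symm)
    · intro p hp
      rcases Finset.mem_offDiag.mp hp with ⟨h1, h2, hne⟩
      exact Finset.mem_offDiag.mpr ⟨h2, h1, fun hh => hne hh.symm⟩
    · intro p hp; rfl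
  exact_mod_cast (ZMod.intCast_zmod_eq_zero_iff_dvd _ 2).mp hcast

lemma two_W15 (hsym : B.IsSymm) (hdiag : ∀ i, B i i = 2 * d i) (a : Fin l → ℕ) :
    2 * W15 B d a = QQ B a - 2 * ∑ i, (d i : ℤ) * a i := by
  have h := QQ_even B d hsym hdiag a
  rw [W15]
  rw [QQ] at h ⊢
  omega

lemma crossZ_comm (hsym : B.IsSymm) (a b : Fin l → ℕ) :
    crossZ B a b = crossZ B b a := by
  rw [crossZ, crossZ, Finset.sum_comm]
  apply Finset.sum_congr rfl; intro i _
  apply Finset.sum_congr rfl; intro j _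
  rw [hsym.apply i j]; ring

lemma QQ_add (hsym : B.IsSymm) (a b : Fin l → ℕ) :
    QQ B (a + b) = QQ B a + QQ B b + 2 * crossZ B a b := by
  have expand : QQ B (a + b) = QQ B a + crossZ B a b + crossZ B b a + QQ B b := by
    simp only [QQ, crossZ, Pi.add_apply]
    push_cast
    simp only [mul_add, add_mul, Finset.sum_add_distrib]
    ring
  rw [expand, crossZ_comm B hsym a b]; ring

lemma W15_add (hsym : B.IsSymm) (hdiag : ∀ i, B i i = 2 * d i) (a b : Fin l → ℕ) :
    W15 B d (a + b) = W15 B d a + W15 B d b + crossZ B a b := by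
  have h2 : (2:ℤ) ≠ 0 := by norm_num
  apply mul_left_cancel₀ h2
  rw [mul_add, mul_add, two_W15 B d hsym hdiag, two_W15 B d hsym hdiag, two_W15 B d hsym hdiag,
    QQ_add B hsym a b]
  have : ∑ i, (d i : ℤ) * ((a + b) i) = (∑ i, (d i : ℤ) * a i) + ∑ i, (d i : ℤ) * b i := by
    simp only [Pi.add_apply]; push_cast
    rw [← Finset.sum_add_distrib]
    apply Finset.sum_congr rfl; intro i _; ring
  rw [this]; ring

lemma Bv_dot (a b : Fin l → ℕ) :
    ∑ i, Bv B a i * b i = crossZ B b a := by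
  rw [crossZ]
  apply Finset.sum_congr rfl; intro i _
  rw [Bv, Finset.sum_mul]
  apply Finset.sum_congr rfl; intro j _; ring

lemma Bv_add (a b : Fin l → ℕ) (i : Fin l) : Bv B (a + b) i = Bv B a i + Bv B b i := by
  simp only [Bv, Pi.add_apply]
  push_cast
  rw [← Finset.sum_add_distrib]
  apply Finset.sum_congr rfl; intro j _; ring

lemma QQ_self (a : Fin l → ℕ) : ∑ i, Bv B a i * a i = QQ B a := by
  rw [QQ]
  apply Finset.sum_congr rfl; intro i _
  rw [Bv, Finset.sum_mul]
  apply Finset.sum_congr rfl; intro j _; ring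

lemma crossZ_add_left (a b c : Fin l → ℕ) :
    crossZ B (a + b) c = crossZ B a c + crossZ B b c := by
  simp only [crossZ, Pi.add_apply]
  push_cast
  rw [← Finset.sum_add_distrib]
  apply Finset.sum_congr rfl; intro i _
  rw [← Finset.sum_add_distrib]
  apply Finset.sum_congr rfl; intro j _; ring

lemma crossZ_add_right (a b c : Fin l → ℕ) :
    crossZ B a (b + c) = crossZ B a b + crossZ B a c := by
  simp only [crossZ, Pi.add_apply]
  push_cast
  rw [← Finset.sum_add_distrib]
  apply Finset.sum_congr rfl; intro i _
  rw [← Finset.sum_add_distrib]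
  apply Finset.sum_congr rfl; intro j _; ring

lemma W15_zero : W15 B d 0 = 0 := by
  simp [W15]

lemma crossZ_zero_right (a : Fin l → ℕ) : crossZ B a 0 = 0 := by
  simp [crossZ]

/-! ### the monomials `Xq c a = w_c^a q^{W(a)}` -/

def Ex (c a : Fin l → ℕ) : ℤ := (∑ i, Bv B c i * a i) + W15 B d a

def Xq (c a : Fin l → ℕ) : F15 l := (∏ i, z15 l i ^ a i) * q15 l ^ Ex B d c a

lemma Xq_ne (c a : Fin l → ℕ) : Xq B d c a ≠ 0 :=
  mul_ne_zero (Finset.prod_ne_zero_iff.mpr fun i _ => pow_ne_zero _ (z_ne i))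
    (zpow_ne_zero _ q_ne)

lemma Ex_zero_right (c : Fin l → ℕ) : Ex B d c 0 = 0 := by
  simp [Ex, W15_zero]

lemma Ex_zero_left (a : Fin l → ℕ) : Ex B d 0 a = W15 B d a := by
  simp [Ex, Bv]

lemma Xq_zero (c : Fin l → ℕ) : Xq B d c 0 = 1 := by
  simp [Xq, Ex_zero_right]

lemma Xq_ne_one (c m : Fin l → ℕ) (hm : m ≠ 0) : Xq B d c m ≠ 1 :=
  mono_ne_one m hm _

lemma Ex_add (hsym : B.IsSymm) (hdiag : ∀ i, B i i = 2 * d i) (c a b : Fin l → ℕ) :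
    Ex B d c (a + b) = Ex B d c a + Ex B d (c + a) b := by
  simp only [Ex, Bv_dot]
  rw [W15_add B d hsym hdiag, crossZ_add_left, crossZ_add_right,
    crossZ_comm B hsym b a]
  ring

lemma Xq_mul (hsym : B.IsSymm) (hdiag : ∀ i, B i i = 2 * d i) (c a b : Fin l → ℕ) :
    Xq B d c (a + b) = Xq B d c a * Xq B d (c + a) b := by
  rw [Xq, Xq, Xq, Ex_add B d hsym hdiag, zpow_add₀ q_ne]
  rw [show (∏ i, z15 l i ^ (a + b) i) = (∏ i, z15 l i ^ a i) * ∏ i, z15 l i ^ b i by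
    rw [← Finset.prod_mul_distrib]
    exact Finset.prod_congr rfl fun i _ => by rw [Pi.add_apply, pow_add]]
  ring

lemma Xq_shift (hsym : B.IsSymm) (hdiag : ∀ i, B i i = 2 * d i) (c a b : Fin l → ℕ) :
    (Xq B d c a)⁻¹ * Xq B d c (a + b) = Xq B d (a + c) b := by
  rw [Xq_mul B d hsym hdiag, inv_mul_cancel_left₀ (Xq_ne B d c a), add_comm c a]

/-! ### coefficient identities -/

lemma coeff_pos (v b : Fin l → ℕ) :
    (∏ i, (z15 l i * q15 l ^ (Bv B v i)) ^ b i) * q15 l ^ (W15 B d b) = Xq B d v b := by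
  have h1 : ∀ i : Fin l, (z15 l i * q15 l ^ (Bv B v i)) ^ b i
      = z15 l i ^ b i * q15 l ^ (Bv B v i * b i) := by
    intro i
    rw [mul_pow, ← zpow_natCast (q15 l ^ (Bv B v i)), ← zpow_mul]
  rw [Finset.prod_congr rfl fun i _ => h1 i, Finset.prod_mul_distrib,
    ← zpow_sum _ q_ne, Xq, Ex, mul_assoc, ← zpow_add₀ q_ne]

lemma coeff_neg (hsym : B.IsSymm) (hdiag : ∀ i, B i i = 2 * d i) (u b : Fin l → ℕ) :
    (∏ i, ((z15 l i)⁻¹ * q15 l ^ (-(Bv B (u + b) i) + 2 * (d i : ℤ))) ^ b i) *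
        q15 l ^ (W15 B d b) = (Xq B d u b)⁻¹ := by
  have h1 : ∀ i : Fin l, ((z15 l i)⁻¹ * q15 l ^ (-(Bv B (u + b) i) + 2 * (d i : ℤ))) ^ b i
      = (z15 l i ^ b i)⁻¹ * q15 l ^ ((-(Bv B (u + b) i) + 2 * (d i : ℤ)) * b i) := by
    intro i
    rw [mul_pow, ← zpow_natCast (q15 l ^ _), ← zpow_mul, inv_pow]
  rw [Finset.prod_congr rfl fun i _ => h1 i, Finset.prod_mul_distrib,
    ← zpow_sum _ q_ne, Finset.prod_inv_distrib, Xq, mul_inv, ← zpow_neg,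
    mul_assoc, ← zpow_add₀ q_ne]
  congr 1
  have hexp : ∑ i, (-(Bv B (u + b) i) + 2 * (d i : ℤ)) * (b i : ℤ)
      = -(∑ i, Bv B u i * b i) - QQ B b + 2 * ∑ i, (d i : ℤ) * b i := by
    rw [← QQ_self B b]
    rw [show -(∑ i, Bv B u i * b i) - (∑ i, Bv B b i * b i) + 2 * ∑ i, (d i : ℤ) * b i
        = ∑ i, (-(Bv B u i * b i) - Bv B b i * b i + 2 * ((d i : ℤ) * b i)) by
      rw [Finset.sum_add_distrib, Finset.sum_sub_distrib, ← Finset.sum_neg_distrib,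
        Finset.mul_sum]]
    apply Finset.sum_congr rfl; intro i _
    rw [Bv_add B u b i]; ring
  have h2w := two_W15 B d hsym hdiag b
  congr 1
  rw [hexp, Ex]
  omega

/-! ### double-sum reindexing -/

variable {M : Type} [AddCommMonoid M]

lemma master (m : Fin l → ℕ) (f : (Fin l → ℕ) → (Fin l → ℕ) → M) :
    ∑ a ∈ Finset.Iic m, ∑ b ∈ Finset.Iic (m - a), f a b
      = ∑ e ∈ Finset.Iic m, ∑ a ∈ Finset.Iic e, f a (e - a) := by
  rw [Finset.sum_sigma', Finset.sum_sigma']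
  refine Finset.sum_nbij' (fun p => ⟨p.1 + p.2, p.1⟩) (fun p => ⟨p.2, p.1 - p.2⟩)
    ?_ ?_ ?_ ?_ ?_
  · intro p hp
    simp only [Finset.mem_sigma, Finset.mem_Iic, Pi.le_def] at hp ⊢
    obtain ⟨h1, h2⟩ := hp
    constructor
    · intro i; have := h1 i; have := h2 i; simp only [Pi.add_apply]
      simp only [Pi.sub_apply] at *; omega
    · intro i; simp only [Pi.add_apply]; omega
  · intro p hp
    simp only [Finset.mem_sigma, Finset.mem_Iic, Pi.le_def] at hp ⊢
    obtain ⟨h1, h2⟩ := hp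
    constructor
    · intro i; have := h1 i; have := h2 i; omega
    · intro i; have := h1 i; have := h2 i; simp only [Pi.sub_apply] at *; omega
  · intro p hp
    simp only [Finset.mem_sigma, Finset.mem_Iic, Pi.le_def] at hp
    obtain ⟨h1, h2⟩ := hp
    exact Sigma.ext rfl (heq_of_eq (funext fun i => by
      simp only [Pi.add_apply, Pi.sub_apply]; omega))
  · intro p hp
    simp only [Finset.mem_sigma, Finset.mem_Iic, Pi.le_def] at hp
    obtain ⟨h1, h2⟩ := hp
    refine Sigma.ext (funext fun i => ?_) HEq.rfl
    simp only [Pi.add_apply, Pi.sub_apply]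
    have := h2 i; omega
  · intro p hp
    simp only [Finset.mem_sigma, Finset.mem_Iic, Pi.le_def] at hp
    obtain ⟨h1, h2⟩ := hp
    show f p.1 p.2 = f p.1 (p.1 + p.2 - p.1)
    congr 1
    funext i; simp only [Pi.add_apply, Pi.sub_apply]; omega

lemma reflect (e : Fin l → ℕ) (h : (Fin l → ℕ) → M) :
    ∑ b ∈ Finset.Iic e, h b = ∑ b ∈ Finset.Iic e, h (e - b) := by
  refine Finset.sum_nbij' (fun b => e - b) (fun b => e - b) ?_ ?_ ?_ ?_ ?_
  · intro b hb; simp only [Finset.mem_Iic, Pi.le_def] at *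
    intro i; simp only [Pi.sub_apply]; omega
  · intro b hb; simp only [Finset.mem_Iic, Pi.le_def] at *
    intro i; simp only [Pi.sub_apply]; omega
  · intro b hb; simp only [Finset.mem_Iic, Pi.le_def] at hb
    funext i; simp only [Pi.sub_apply]; have := hb i; omega
  · intro b hb; simp only [Finset.mem_Iic, Pi.le_def] at hb
    funext i; simp only [Pi.sub_apply]; have := hb i; omega
  · intro b hb
    simp only [Finset.mem_Iic, Pi.le_def] at hb
    congr 1
    funext i; simp only [Pi.sub_apply]; have := hb i; omega

/-! ### the two expansions and the main induction -/

def Pfac (n : Fin l → ℕ) : F15 l := ∏ i, pochQ (q15 l ^ d i) (n i)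

lemma Pfac_zero : Pfac d 0 = 1 := by simp [Pfac, pochQ]

variable (Jneg Jpos : (Fin l → ℕ) → (Fin l → ℕ) → F15 l)

def TT (c m : Fin l → ℕ) : F15 l :=
  ∑ a ∈ Finset.Iic m, (Xq B d c a)⁻¹ * Jneg (a + c) a * Jpos (a + c) (m - a)

def SS (c m : Fin l → ℕ) : F15 l :=
  ∑ a ∈ Finset.Iic m, Jneg (a + c) a * Jpos (a + c) (m - a)

lemma TT_zero (hJneg : ∀ a, IsFerm B d (q15 l)
      (fun i => (z15 l i)⁻¹ * q15 l ^ (-(Bv B a i) + 2 * (d i : ℤ))) (Jneg a))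
    (hJpos : ∀ a, IsFerm B d (q15 l)
      (fun i => z15 l i * q15 l ^ (Bv B a i)) (Jpos a))
    (c : Fin l → ℕ) : TT B d Jneg Jpos c 0 = 1 := by
  have hIic : (Finset.Iic (0 : Fin l → ℕ)) = {0} := by
    ext a
    simp [Finset.mem_Iic, Pi.le_def, funext_iff, Nat.le_zero]
  rw [TT, hIic, Finset.sum_singleton, Xq_zero, zero_add, tsub_self,
    (hJneg c).1, (hJpos c).1]
  norm_num

lemma E1 (hsym : B.IsSymm) (hdiag : ∀ i, B i i = 2 * d i)
    (hJpos : ∀ a, IsFerm B d (q15 l)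
      (fun i => z15 l i * q15 l ^ (Bv B a i)) (Jpos a))
    (c m : Fin l → ℕ) :
    SS Jneg Jpos c m
      = ∑ e ∈ Finset.Iic m, Xq B d c e * (Pfac d (m - e))⁻¹ * TT B d Jneg Jpos c e := by
  have hrec : ∀ v n, Jpos v n = ∑ b ∈ Finset.Iic n,
      (∏ i, (z15 l i * q15 l ^ (Bv B v i)) ^ b i) * q15 l ^ (W15 B d b) *
        (∏ i, pochQ (q15 l ^ d i) (n i - b i))⁻¹ * Jpos v b := fun v n => (hJpos v).2 n
  calc SS Jneg Jpos c m
      = ∑ a ∈ Finset.Iic m, ∑ b ∈ Finset.Iic (m - a),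
          (Xq B d c a)⁻¹ * Xq B d c (a + b) *
            (∏ i, pochQ (q15 l ^ d i) ((m - a) i - b i))⁻¹ *
            (Jneg (a + c) a * Jpos (a + c) b) := by
        rw [SS]
        apply Finset.sum_congr rfl; intro a _
        rw [hrec (a + c) (m - a), Finset.mul_sum]
        apply Finset.sum_congr rfl; intro b _
        rw [Xq_shift B d hsym hdiag, ← coeff_pos B d (a + c) b]
        ring
    _ = ∑ e ∈ Finset.Iic m, ∑ a ∈ Finset.Iic e,
          (Xq B d c a)⁻¹ * Xq B d c (a + (e - a)) *
            (∏ i, pochQ (q15 l ^ d i) ((m - a) i - (e - a) i))⁻¹ *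
            (Jneg (a + c) a * Jpos (a + c) (e - a)) := master m _
    _ = ∑ e ∈ Finset.Iic m, Xq B d c e * (Pfac d (m - e))⁻¹ * TT B d Jneg Jpos c e := by
        apply Finset.sum_congr rfl; intro e he
        rw [TT, Finset.mul_sum]
        apply Finset.sum_congr rfl; intro a ha
        have hae : a + (e - a) = e := funext fun i => by
          have h1 := Pi.le_def.mp (Finset.mem_Iic.mp ha) i
          simp only [Pi.add_apply, Pi.sub_apply]; omega
        have hpoch : (∏ i, pochQ (q15 l ^ d i) ((m - a) i - (e - a) i)) = Pfac d (m - e) := by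
          rw [Pfac]
          apply Finset.prod_congr rfl; intro i _
          congr 1
          have h1 := Pi.le_def.mp (Finset.mem_Iic.mp ha) i
          have h2 := Pi.le_def.mp (Finset.mem_Iic.mp he) i
          simp only [Pi.sub_apply]; omega
        rw [hae, hpoch]
        ring

def Ff (c m g x : Fin l → ℕ) : F15 l :=
  (Xq B d (c + g) x)⁻¹ * (Pfac d g)⁻¹ *
    (Jneg (x + (c + g)) x * Jpos (x + (c + g)) ((m - g) - x))

lemma E2 (hsym : B.IsSymm) (hdiag : ∀ i, B i i = 2 * d i)
    (hJneg : ∀ a, IsFerm B d (q15 l)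
      (fun i => (z15 l i)⁻¹ * q15 l ^ (-(Bv B a i) + 2 * (d i : ℤ))) (Jneg a))
    (c m : Fin l → ℕ) :
    SS Jneg Jpos c m
      = ∑ g ∈ Finset.Iic m, (Pfac d g)⁻¹ * TT B d Jneg Jpos (c + g) (m - g) := by
  have hrec : ∀ v n, Jneg v n = ∑ b ∈ Finset.Iic n,
      (∏ i, ((z15 l i)⁻¹ * q15 l ^ (-(Bv B v i) + 2 * (d i : ℤ))) ^ b i) *
        q15 l ^ (W15 B d b) *
        (∏ i, pochQ (q15 l ^ d i) (n i - b i))⁻¹ * Jneg v b := fun v n => (hJneg v).2 n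
  calc SS Jneg Jpos c m
      = ∑ a ∈ Finset.Iic m, ∑ b ∈ Finset.Iic a,
          (Xq B d (c + (a - b)) b)⁻¹ * (∏ i, pochQ (q15 l ^ d i) (a i - b i))⁻¹ *
            (Jneg (a + c) b * Jpos (a + c) (m - a)) := by
        rw [SS]
        apply Finset.sum_congr rfl; intro a _
        rw [hrec (a + c) a, Finset.sum_mul]
        apply Finset.sum_congr rfl; intro b hb
        have hub : (c + (a - b)) + b = a + c := funext fun i => by
          have h1 := Pi.le_def.mp (Finset.mem_Iic.mp hb) i
          simp only [Pi.add_apply, Pi.sub_apply]; omega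
        rw [← coeff_neg B d hsym hdiag (c + (a - b)) b, hub]
        ring
    _ = ∑ a ∈ Finset.Iic m, ∑ b ∈ Finset.Iic a, Ff B d Jneg Jpos c m b (a - b) := by
        apply Finset.sum_congr rfl; intro a ha
        rw [reflect a (fun b => (Xq B d (c + (a - b)) b)⁻¹ *
          (∏ i, pochQ (q15 l ^ d i) (a i - b i))⁻¹ *
          (Jneg (a + c) b * Jpos (a + c) (m - a)))]
        apply Finset.sum_congr rfl; intro b hb
        have hba := Pi.le_def.mp (Finset.mem_Iic.mp hb)
        have ham := Pi.le_def.mp (Finset.mem_Iic.mp ha)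
        have h1 : a - (a - b) = b := funext fun i => by
          have := hba i; simp only [Pi.sub_apply]; omega
        have h3 : (a - b) + (c + b) = a + c := funext fun i => by
          have := hba i; simp only [Pi.add_apply, Pi.sub_apply]; omega
        have h4 : (m - b) - (a - b) = m - a := funext fun i => by
          have := hba i; have := ham i; simp only [Pi.sub_apply]; omega
        have hpoch : (∏ i, pochQ (q15 l ^ d i) (a i - (a - b) i)) = Pfac d b := by
          rw [Pfac]
          apply Finset.prod_congr rfl; intro i _
          congr 1
          have := hba i; simp only [Pi.sub_apply]; omega
        rw [Ff, h1, h3, h4, hpoch]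
    _ = ∑ g ∈ Finset.Iic m, ∑ x ∈ Finset.Iic (m - g), Ff B d Jneg Jpos c m g x :=
        (master m (Ff B d Jneg Jpos c m)).symm
    _ = ∑ g ∈ Finset.Iic m, (Pfac d g)⁻¹ * TT B d Jneg Jpos (c + g) (m - g) := by
        apply Finset.sum_congr rfl; intro g _
        rw [TT, Finset.mul_sum]
        apply Finset.sum_congr rfl; intro x _
        rw [Ff]
        ring

lemma main (hsym : B.IsSymm) (hdiag : ∀ i, B i i = 2 * d i)
    (hJneg : ∀ a, IsFerm B d (q15 l)
      (fun i => (z15 l i)⁻¹ * q15 l ^ (-(Bv B a i) + 2 * (d i : ℤ))) (Jneg a))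
    (hJpos : ∀ a, IsFerm B d (q15 l)
      (fun i => z15 l i * q15 l ^ (Bv B a i)) (Jpos a)) :
    ∀ n : ℕ, ∀ c m : Fin l → ℕ, (∑ i, m i) = n →
      TT B d Jneg Jpos c m = if m = 0 then 1 else 0 := by
  intro n
  induction n using Nat.strong_induction_on with
  | _ n IH =>
  intro c m hn
  by_cases h0 : m = 0
  · subst h0
    rw [if_pos rfl]
    exact TT_zero B d Jneg Jpos hJneg hJpos c
  · rw [if_neg h0]
    have hE := (E1 B d Jneg Jpos hsym hdiag hJpos c m).symm.trans
      (E2 B d Jneg Jpos hsym hdiag hJneg c m)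
    have hmem : m ∈ Finset.Iic m := Finset.mem_Iic.mpr le_rfl
    have hmem0 : (0 : Fin l → ℕ) ∈ Finset.Iic m :=
      Finset.mem_Iic.mpr (fun i => Nat.zero_le _)
    rw [Finset.sum_eq_sum_sdiff_singleton_add hmem, Finset.sum_eq_sum_sdiff_singleton_add hmem0]
      at hE
    have hsum1 : ∑ e ∈ Finset.Iic m \ {m},
        Xq B d c e * (Pfac d (m - e))⁻¹ * TT B d Jneg Jpos c e = (Pfac d m)⁻¹ := by
      have hmemd : (0 : Fin l → ℕ) ∈ Finset.Iic m \ {m} := by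
        rw [Finset.mem_sdiff, Finset.mem_singleton]
        exact ⟨hmem0, fun h => h0 h.symm⟩
      rw [Finset.sum_eq_single_of_mem (0 : Fin l → ℕ) hmemd ?_]
      · rw [Xq_zero, tsub_zero, TT_zero B d Jneg Jpos hJneg hJpos c]
        ring
      · intro e he hne
        have he' : e ∈ Finset.Iic m := (Finset.mem_sdiff.mp he).1
        have hem : e ≠ m := by
          have := (Finset.mem_sdiff.mp he).2
          simpa using this
        have hlt : (∑ i, e i) < n := by
          rw [← hn]
          apply Finset.sum_lt_sum (fun i _ => Pi.le_def.mp (Finset.mem_Iic.mp he') i)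
          obtain ⟨i, hi⟩ : ∃ i, e i ≠ m i := by
            by_contra hc; push_neg at hc; exact hem (funext hc)
          exact ⟨i, Finset.mem_univ i, lt_of_le_of_ne (Pi.le_def.mp (Finset.mem_Iic.mp he') i) hi⟩
        rw [IH _ hlt c e rfl, if_neg hne, mul_zero]
    have hsum2 : ∑ g ∈ Finset.Iic m \ {0},
        (Pfac d g)⁻¹ * TT B d Jneg Jpos (c + g) (m - g) = (Pfac d m)⁻¹ := by
      have hmemd : m ∈ Finset.Iic m \ {0} := by
        rw [Finset.mem_sdiff, Finset.mem_singleton]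
        exact ⟨hmem, h0⟩
      rw [Finset.sum_eq_single_of_mem m hmemd ?_]
      · rw [tsub_self, TT_zero B d Jneg Jpos hJneg hJpos (c + m), mul_one]
      · intro g hg hne
        have hg' : g ∈ Finset.Iic m := (Finset.mem_sdiff.mp hg).1
        have hg0 : g ≠ 0 := by
          have := (Finset.mem_sdiff.mp hg).2
          simpa using this
        have hlt : (∑ i, (m - g) i) < n := by
          rw [← hn]
          apply Finset.sum_lt_sum (fun i _ => by
            simp only [Pi.sub_apply]; exact Nat.sub_le _ _)
          obtain ⟨i, hi⟩ : ∃ i, g i ≠ 0 := by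
            by_contra hc; push_neg at hc; exact hg0 (funext hc)
          refine ⟨i, Finset.mem_univ i, ?_⟩
          have := Pi.le_def.mp (Finset.mem_Iic.mp hg') i
          simp only [Pi.sub_apply]; omega
        have hne' : m - g ≠ 0 := by
          intro hc
          apply hne
          funext i
          have h1 := Pi.le_def.mp (Finset.mem_Iic.mp hg') i
          have h2 := congrFun hc i
          simp only [Pi.sub_apply, Pi.zero_apply] at h2
          omega
        rw [IH _ hlt (c + g) (m - g) rfl, if_neg hne', mul_zero]
    rw [hsum1, hsum2, tsub_self, tsub_zero, add_zero, Pfac_zero, inv_one, one_mul] at hE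
    have hfin : (Xq B d c m - 1) * TT B d Jneg Jpos c m = 0 := by
      linear_combination hE
    rcases mul_eq_zero.mp hfin with h | h
    · exact absurd (sub_eq_zero.mp h) (Xq_ne_one B d c m h0)
    · exact h

end S15

theorem stmt_15 (l : ℕ) (hl : 1 ≤ l) (B : Matrix (Fin l) (Fin l) ℤ) (d : Fin l → ℕ)
    (hsym : B.IsSymm) (hdpos : ∀ i, 0 < d i) (hdiag : ∀ i, B i i = 2 * d i)
    (hoff : ∀ i j, i ≠ j → B i j ≤ 0) (hdvd : ∀ i j, (d i : ℤ) ∣ B i j)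
    (hposdef : ∀ x : Fin l → ℤ, x ≠ 0 → 0 < ∑ i, ∑ j, B i j * x i * x j)
    -- for each a, J in the substituted variables z_i⁻¹ q^{−(Ba)_i + 2 d_i}
    (Jneg : (Fin l → ℕ) → (Fin l → ℕ) → F15 l)
    (hJneg : ∀ a, IsFerm B d (q15 l)
      (fun i => (z15 l i)⁻¹ * q15 l ^ (-(Bv B a i) + 2 * (d i : ℤ))) (Jneg a))
    -- for each a, J in the substituted variables z_i q^{(Ba)_i}
    (Jpos : (Fin l → ℕ) → (Fin l → ℕ) → F15 l)
    (hJpos : ∀ a, IsFerm B d (q15 l)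
      (fun i => z15 l i * q15 l ^ (Bv B a i)) (Jpos a)) :
    ∀ m : Fin l → ℕ,
      ∑ a ∈ Finset.Iic m,
        ((∏ i, z15 l i ^ a i) * q15 l ^ (W15 B d a))⁻¹ *
          Jneg a a * Jpos a (m - a)
      = if m = 0 then 1 else 0 := by
  intro m
  have h := S15.main B d Jneg Jpos hsym hdiag hJneg hJpos (∑ i, m i) 0 m rfl
  rw [← h, S15.TT]
  apply Finset.sum_congr rfl; intro a _
  rw [add_zero, S15.Xq, S15.Ex_zero_left]

end
end
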